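/- Let C be a t-dimensional dually AMRD F_q-linear code of n×m matrices with m | t. Then the number of minimum-rank codewords of C equals the number of minimum-rank codewords of C^⊥: A_d(C) = A_{d^⊥}(C^⊥), where d = n - t/m and d^⊥ = t/m. -/

import Mathlib

open Module Matrix

/-- `d` is the minimum rank-metric distance of the set `S` of `n × m` matrices. -/
def MatMinDist {Fq : Type*} [Field Fq] {n m : ℕ}
    (S : Set (Matrix (Fin n) (Fin m) Fq)) (d : ℕ) : Prop :=
  (∃ A ∈ S, A ≠ 0 ∧ A.rank = d) ∧ ∀ A ∈ S, A ≠ 0 → d ≤ A.rank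

/-- The dual of a matrix code with respect to the trace bilinear form
`⟨B, A⟩ = Tr(B Aᵀ)`. -/
def matDual {Fq : Type*} [Field Fq] {n m : ℕ}
    (C : Submodule Fq (Matrix (Fin n) (Fin m) Fq)) : Set (Matrix (Fin n) (Fin m) Fq) :=
  {B | ∀ A ∈ C, Matrix.trace (B * Aᵀ) = 0}
/-- The Gaussian (q-)binomial coefficient `[a choose b]_q`, via the Pascal-type
recurrence `[a+1, b+1]_q = [a, b]_q + q^(b+1) [a, b+1]_q`. -/
def gbinom (q : ℕ) : ℕ → ℕ → ℕ
  | _, 0 => 1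
  | 0, _ + 1 => 0
  | a + 1, b + 1 => gbinom q a b + q ^ (b + 1) * gbinom q a (b + 1)

/-- `rankDist S i = A_i(S)`: the number of elements of `S` of rank `i`. -/
noncomputable def rankDist {Fq : Type*} [Field Fq] {n m : ℕ}
    (S : Set (Matrix (Fin n) (Fin m) Fq)) (i : ℕ) : ℕ :=
  Set.ncard {A | A ∈ S ∧ A.rank = i}

namespace AMRDaux
variable {K : Type*} [Field K] {n m : ℕ}

noncomputable def phi (K : Type*) [Field K] (n : ℕ) : LinearMap.BilinForm K (Fin n → K) :=
  LinearMap.mk₂ K (fun x y => ∑ i, x i * y i)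
    (fun x x' y => by simp [add_mul, Finset.sum_add_distrib])
    (fun c x y => by simp [Finset.mul_sum, mul_assoc])
    (fun x y y' => by simp [mul_add, Finset.sum_add_distrib])
    (fun c x y => by simp [Finset.mul_sum]; exact Finset.sum_congr rfl fun i _ => by ring)

@[simp] lemma phi_apply (x y : Fin n → K) : phi K n x y = ∑ i, x i * y i := rfl
lemma phi_symm : (phi K n).IsSymm := ⟨fun x y => by simp [mul_comm]⟩
lemma phi_refl : (phi K n).IsRefl := phi_symm.isRefl
lemma phi_nondeg : (phi K n).Nondegenerate := by
  refine (LinearMap.IsRefl.nondegenerate_iff_separatingLeft (show LinearMap.IsRefl (phi K n) from phi_refl)).mpr ?_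
  intro x h
  funext i
  have := h (Pi.single i 1)
  simpa [Pi.single_apply, mul_ite] using this

noncomputable def Phi (K : Type*) [Field K] (n m : ℕ) :
    LinearMap.BilinForm K (Matrix (Fin n) (Fin m) K) :=
  LinearMap.mk₂ K (fun X Y => ∑ j, ∑ i, X i j * Y i j)
    (fun x x' y => by simp [Matrix.add_apply, add_mul, Finset.sum_add_distrib])
    (fun c x y => by simp [Matrix.smul_apply, Finset.mul_sum, mul_assoc, smul_eq_mul])
    (fun x y y' => by simp [Matrix.add_apply, mul_add, Finset.sum_add_distrib])
    (fun c x y => by simp [Matrix.smul_apply, Finset.mul_sum, smul_eq_mul]; exact Finset.sum_congr rfl fun j _ => Finset.sum_congr rfl fun i _ => by ring)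

@[simp] lemma Phi_apply (X Y : Matrix (Fin n) (Fin m) K) :
    Phi K n m X Y = ∑ j, ∑ i, X i j * Y i j := rfl
lemma Phi_symm : (Phi K n m).IsSymm := ⟨fun x y => by simp [mul_comm]⟩
lemma Phi_refl : (Phi K n m).IsRefl := Phi_symm.isRefl
lemma Phi_nondeg : (Phi K n m).Nondegenerate := by
  refine (LinearMap.IsRefl.nondegenerate_iff_separatingLeft (show LinearMap.IsRefl (Phi K n m) from Phi_refl)).mpr ?_
  intro X h
  funext i j
  have := h (fun i' j' => if i' = i then (if j' = j then 1 else 0) else 0)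
  erw [Phi_apply] at this
  simp only [mul_ite, mul_one, mul_zero] at this
  rw [Finset.sum_comm] at this
  simpa [Finset.sum_ite_eq, Finset.sum_ite_eq'] using this
lemma Phi_eq_trace (X Y : Matrix (Fin n) (Fin m) K) :
    Matrix.trace (X * Yᵀ) = Phi K n m X Y := by
  simp [Matrix.trace, Matrix.mul_apply, Matrix.diag]
  exact Finset.sum_comm

def colSub (U : Submodule K (Fin n → K)) : Submodule K (Matrix (Fin n) (Fin m) K) where
  carrier := {A | ∀ j, (fun i => A i j) ∈ U}
  add_mem' := by
    intro A B hA hB j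
    have : (fun i => (A + B) i j) = (fun i => A i j) + (fun i => B i j) := by
      funext i; simp [Matrix.add_apply]
    rw [this]; exact U.add_mem (hA j) (hB j)
  zero_mem' := by
    intro j
    have : (fun i => (0 : Matrix (Fin n) (Fin m) K) i j) = (0 : Fin n → K) := by
      funext i; simp
    rw [this]; exact U.zero_mem
  smul_mem' := by
    intro c A hA j
    have : (fun i => (c • A) i j) = c • (fun i => A i j) := by
      funext i; simp [Matrix.smul_apply]
    rw [this]; exact U.smul_mem c (hA j)

lemma mem_colSub {U : Submodule K (Fin n → K)} {A : Matrix (Fin n) (Fin m) K} :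
    A ∈ (colSub U : Submodule K (Matrix (Fin n) (Fin m) K)) ↔ ∀ j, (fun i => A i j) ∈ U :=
  Iff.rfl

lemma mem_colSub_iff_range {U : Submodule K (Fin n → K)} {A : Matrix (Fin n) (Fin m) K} :
    A ∈ (colSub U : Submodule K (Matrix (Fin n) (Fin m) K)) ↔
      LinearMap.range A.mulVecLin ≤ U := by
  rw [Matrix.range_mulVecLin, Submodule.span_le, mem_colSub]
  constructor
  · intro h x hx
    obtain ⟨j, rfl⟩ := hx
    have : Aᵀ j = fun i => A i j := by funext i; simp [Matrix.transpose_apply]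
    exact h j
  · intro h j
    have : (fun i => A i j) = Aᵀ j := by funext i; simp [Matrix.transpose_apply]
    rw [this]; exact h ⟨j, rfl⟩

noncomputable def colSubEquiv (U : Submodule K (Fin n → K)) :
    (colSub U : Submodule K (Matrix (Fin n) (Fin m) K)) ≃ₗ[K] (Fin m → U) where
  toFun A := fun j => ⟨fun i => A.1 i j, A.2 j⟩
  map_add' A B := by funext j; ext i; simp [Matrix.add_apply]
  map_smul' c A := by funext j; ext i; simp [Matrix.smul_apply]
  invFun f := ⟨(fun i j => (f j).1 i : Matrix (Fin n) (Fin m) K), fun j => (f j).2⟩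
  left_inv A := rfl
  right_inv f := rfl

lemma finrank_colSub (U : Submodule K (Fin n → K)) :
    finrank K (colSub U : Submodule K (Matrix (Fin n) (Fin m) K)) = m * finrank K U := by
  rw [(colSubEquiv U).finrank_eq, Module.finrank_pi_fintype]
  simp [Finset.sum_const, mul_comm]

/-- orthogonal of `colSub U` is `colSub` of the orthogonal. -/
lemma orthogonal_colSub (U : Submodule K (Fin n → K)) :
    (Phi K n m).orthogonal (colSub U) = colSub ((phi K n).orthogonal U) := by
  ext B
  constructor
  · intro hB j
    rw [LinearMap.BilinForm.mem_orthogonal_iff] at *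
    intro u hu
    have hA : (fun i j' => if j' = j then u i else 0) ∈
        (colSub U : Submodule K (Matrix (Fin n) (Fin m) K)) := by
      intro j'
      by_cases h : j' = j
      · subst h; simpa using hu
      · have : (fun i => if j' = j then u i else 0) = (0 : Fin n → K) := by
          funext i; simp [h]
        rw [this]; exact U.zero_mem
    have := hB _ hA
    erw [Phi_apply] at this
    rw [phi_apply]
    rw [Finset.sum_eq_single j (fun j' _ hj' => by simp [hj']) (by simp)] at this
    simpa using this
  · intro hB
    rw [LinearMap.BilinForm.mem_orthogonal_iff]
    intro A hA
    rw [Phi_apply]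
    refine Finset.sum_eq_zero fun j _ => ?_
    have := hB j
    rw [LinearMap.BilinForm.mem_orthogonal_iff] at this
    have := this _ (hA j)
    rw [phi_apply] at this
    exact this

section general
variable {V : Type*} [AddCommGroup V] [Module K V] [FiniteDimensional K V]
  {B : LinearMap.BilinForm K V}

lemma orthogonal_sup (W W' : Submodule K V) :
    B.orthogonal (W ⊔ W') = B.orthogonal W ⊓ B.orthogonal W' := by
  ext x
  simp only [LinearMap.BilinForm.mem_orthogonal_iff, Submodule.mem_inf]
  constructor
  · intro h
    exact ⟨fun y hy => h y (Submodule.mem_sup_left hy),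
      fun y hy => h y (Submodule.mem_sup_right hy)⟩
  · rintro ⟨h1, h2⟩ y hy
    obtain ⟨a, ha, b, hb, rfl⟩ := Submodule.mem_sup.mp hy
    have := congrArg₂ (· + ·) (h1 a ha) (h2 b hb)
    simpa [LinearMap.BilinForm.isOrtho_def, map_add] using
      (by rw [LinearMap.BilinForm.isOrtho_def, map_add, LinearMap.add_apply,
        h1 a ha, h2 b hb, add_zero] : B.IsOrtho (a + b) x)

lemma orthogonal_inf (hB : B.Nondegenerate) (hB₀ : B.IsRefl) (W W' : Submodule K V) :
    B.orthogonal (W ⊓ W') = B.orthogonal W ⊔ B.orthogonal W' := by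
  conv_lhs => rw [← LinearMap.BilinForm.orthogonal_orthogonal hB hB₀ W,
    ← LinearMap.BilinForm.orthogonal_orthogonal hB hB₀ W', ← orthogonal_sup]
  exact LinearMap.BilinForm.orthogonal_orthogonal hB hB₀ _

end general

section count
variable [Fintype K]

lemma finrank_mat : finrank K (Matrix (Fin n) (Fin m) K) = n * m := by
  rw [Module.finrank_matrix]
  simp

set_option maxHeartbeats 1000000 in
lemma finrank_inf_orth (C : Submodule K (Matrix (Fin n) (Fin m) K)) (U : Submodule K (Fin n → K))
    (hU : finrank K C = m * (n - finrank K U)) :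
    finrank K (C ⊓ colSub U : Submodule K (Matrix (Fin n) (Fin m) K)) =
    finrank K ((Phi K n m).orthogonal C ⊓ colSub ((phi K n).orthogonal U) :
      Submodule K (Matrix (Fin n) (Fin m) K)) := by
  have horth : (Phi K n m).orthogonal (C ⊓ colSub U) =
      (Phi K n m).orthogonal C ⊔ colSub ((phi K n).orthogonal U) := by
    rw [orthogonal_inf Phi_nondeg Phi_refl, orthogonal_colSub]
  have h1 : finrank K ((Phi K n m).orthogonal (C ⊓ colSub U) :
      Submodule K (Matrix (Fin n) (Fin m) K)) =
      finrank K (Matrix (Fin n) (Fin m) K) -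
        finrank K (C ⊓ colSub U : Submodule K (Matrix (Fin n) (Fin m) K)) :=
    LinearMap.BilinForm.finrank_orthogonal Phi_nondeg _
  have h2 := Submodule.finrank_sup_add_finrank_inf_eq
    ((Phi K n m).orthogonal C) (colSub ((phi K n).orthogonal U) :
      Submodule K (Matrix (Fin n) (Fin m) K))
  have h3 : finrank K ((Phi K n m).orthogonal C) =
      finrank K (Matrix (Fin n) (Fin m) K) - finrank K C :=
    LinearMap.BilinForm.finrank_orthogonal Phi_nondeg _
  have h4 : finrank K ((phi K n).orthogonal U) = finrank K (Fin n → K) - finrank K U :=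
    LinearMap.BilinForm.finrank_orthogonal phi_nondeg _
  have h5 : finrank K (colSub ((phi K n).orthogonal U) :
      Submodule K (Matrix (Fin n) (Fin m) K)) = m * ((n : ℕ) - finrank K U) := by
    rw [finrank_colSub, h4]
    congr 1
    simp [Module.finrank_pi]
  have hCle : finrank K C ≤ finrank K (Matrix (Fin n) (Fin m) K) := Submodule.finrank_le _
  have hXle : finrank K (C ⊓ colSub U : Submodule K (Matrix (Fin n) (Fin m) K)) ≤
      finrank K (Matrix (Fin n) (Fin m) K) := Submodule.finrank_le _
  have hSle : finrank K ((Phi K n m).orthogonal C ⊔ colSub ((phi K n).orthogonal U) :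
      Submodule K (Matrix (Fin n) (Fin m) K)) ≤
      finrank K (Matrix (Fin n) (Fin m) K) := Submodule.finrank_le _
  rw [horth] at h1
  omega

lemma card_inf_orth (C : Submodule K (Matrix (Fin n) (Fin m) K)) (U : Submodule K (Fin n → K))
    (hU : finrank K C = m * (n - finrank K U)) :
    Nat.card (C ⊓ colSub U : Submodule K (Matrix (Fin n) (Fin m) K)) =
    Nat.card ((Phi K n m).orthogonal C ⊓ colSub ((phi K n).orthogonal U) :
      Submodule K (Matrix (Fin n) (Fin m) K)) := by
  classical
  have h := finrank_inf_orth C U hU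
  have c1 : Nat.card (C ⊓ colSub U : Submodule K (Matrix (Fin n) (Fin m) K)) =
      Fintype.card K ^ finrank K (C ⊓ colSub U : Submodule K (Matrix (Fin n) (Fin m) K)) := by
    rw [Nat.card_eq_fintype_card]
    exact card_eq_pow_finrank
  have c2 : Nat.card ((Phi K n m).orthogonal C ⊓ colSub ((phi K n).orthogonal U) :
      Submodule K (Matrix (Fin n) (Fin m) K)) =
      Fintype.card K ^ finrank K ((Phi K n m).orthogonal C ⊓ colSub ((phi K n).orthogonal U) :
        Submodule K (Matrix (Fin n) (Fin m) K)) := by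
    rw [Nat.card_eq_fintype_card]
    exact card_eq_pow_finrank
  rw [c1, c2, h]

end count

section counting
variable [Fintype K]

/-- a nonzero matrix has positive rank. -/
lemma one_le_rank {A : Matrix (Fin n) (Fin m) K} (hA : A ≠ 0) : 1 ≤ A.rank := by
  rw [Nat.one_le_iff_ne_zero]
  intro h0
  apply hA
  have hbot : LinearMap.range A.mulVecLin = ⊥ := by
    have : finrank K (LinearMap.range A.mulVecLin) = 0 := h0
    exact Submodule.finrank_eq_zero.mp this
  funext i j
  have hcol : Aᵀ j ∈ LinearMap.range A.mulVecLin :=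
    ⟨Pi.single j 1, by rw [Matrix.mulVecLin_apply, Matrix.mulVec_single_one]; rfl⟩
  rw [hbot, Submodule.mem_bot] at hcol
  have := congrFun hcol i
  simpa [Matrix.transpose_apply] using this

lemma sum_card_inf [Fintype (Submodule K (Fin n → K))]
    (D : Submodule K (Matrix (Fin n) (Fin m) K)) (e : ℕ) (he : 1 ≤ e)
    (hmin : ∀ A ∈ D, A ≠ 0 → e ≤ A.rank) :
    ∑ U ∈ Finset.univ.filter (fun U : Submodule K (Fin n → K) => finrank K U = e),
        Nat.card (D ⊓ colSub U : Submodule K (Matrix (Fin n) (Fin m) K))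
      = (Finset.univ.filter (fun U : Submodule K (Fin n → K) => finrank K U = e)).card
        + Set.ncard {A | A ∈ (D : Set (Matrix (Fin n) (Fin m) K)) ∧ A.rank = e} := by
  classical
  set Gr := Finset.univ.filter (fun U : Submodule K (Fin n → K) => finrank K U = e) with hGr
  -- step 1: card of each intersection as a sum over all matrices
  have step1 : ∀ U : Submodule K (Fin n → K),
      Nat.card (D ⊓ colSub U : Submodule K (Matrix (Fin n) (Fin m) K))
        = ∑ A : Matrix (Fin n) (Fin m) K, if A ∈ D ∧ A ∈ (colSub U : Submodule K _) then 1 else 0 := by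
    intro U
    rw [Nat.card_eq_fintype_card, Fintype.card_subtype, Finset.card_filter]
    refine Finset.sum_congr rfl fun A _ => ?_
    simp [Submodule.mem_inf]
  -- rewrite and swap the two sums
  calc ∑ U ∈ Gr, Nat.card (D ⊓ colSub U : Submodule K (Matrix (Fin n) (Fin m) K))
      = ∑ U ∈ Gr, ∑ A : Matrix (Fin n) (Fin m) K,
          (if A ∈ D ∧ A ∈ (colSub U : Submodule K _) then 1 else 0) :=
        Finset.sum_congr rfl fun U _ => step1 U
    _ = ∑ A : Matrix (Fin n) (Fin m) K, ∑ U ∈ Gr,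
          (if A ∈ D ∧ A ∈ (colSub U : Submodule K _) then 1 else 0) := Finset.sum_comm
    _ = ∑ A : Matrix (Fin n) (Fin m) K,
          ((if A = 0 then Gr.card else 0) + (if A ∈ D ∧ A.rank = e then 1 else 0)) := by
        refine Finset.sum_congr rfl fun A _ => ?_
        by_cases h0 : A = 0
        · subst h0
          have : ∀ U ∈ Gr, (if (0 : Matrix (Fin n) (Fin m) K) ∈ D ∧
              (0 : Matrix (Fin n) (Fin m) K) ∈ (colSub U : Submodule K _) then 1 else 0) = 1 := by
            intro U _
            simp [D.zero_mem, (colSub U).zero_mem]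
          rw [Finset.sum_congr rfl this, Finset.sum_const, smul_eq_mul, mul_one]
          have h0e : ¬ ((0 : Matrix (Fin n) (Fin m) K) ∈ D ∧
              (0 : Matrix (Fin n) (Fin m) K).rank = e) := by
            rintro ⟨-, h⟩
            rw [Matrix.rank_zero] at h
            omega
          simp [h0e, (show ¬ (0:ℕ) = e by omega)]
        · by_cases hD : A ∈ D
          · have hrk : e ≤ A.rank := hmin A hD h0
            by_cases hre : A.rank = e
            · -- exactly one U works, namely the column space
              have key : ∀ U ∈ Gr, (if A ∈ D ∧ A ∈ (colSub U : Submodule K _) then 1 else 0)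
                  = (if U = LinearMap.range A.mulVecLin then 1 else 0) := by
                intro U hU
                rw [hGr, Finset.mem_filter] at hU
                by_cases hle : A ∈ (colSub U : Submodule K _)
                · have hle' := mem_colSub_iff_range.mp hle
                  have : LinearMap.range A.mulVecLin = U := by
                    apply Submodule.eq_of_le_of_finrank_le hle'
                    rw [hU.2, ← hre]
                    exact le_rfl
                  rw [if_pos ⟨hD, hle⟩, if_pos this.symm]
                · have : ¬ U = LinearMap.range A.mulVecLin := by
                    rintro rfl
                    exact hle (mem_colSub_iff_range.mpr le_rfl)
                  simp [hle, this]
              rw [Finset.sum_congr rfl key, Finset.sum_ite_eq' Gr]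
              have hmem : LinearMap.range A.mulVecLin ∈ Gr := by
                rw [hGr, Finset.mem_filter]
                exact ⟨Finset.mem_univ _, hre⟩
              simp [hmem, h0, hD, hre]
            · -- rank too big: no U works
              have key : ∀ U ∈ Gr, (if A ∈ D ∧ A ∈ (colSub U : Submodule K _) then 1 else 0) = 0 := by
                intro U hU
                rw [hGr, Finset.mem_filter] at hU
                have : ¬ A ∈ (colSub U : Submodule K _) := by
                  intro hle
                  have := Submodule.finrank_mono (mem_colSub_iff_range.mp hle)
                  rw [hU.2] at this
                  exact hre (le_antisymm this hrk)
                simp [this]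
              rw [Finset.sum_congr rfl key, Finset.sum_const, smul_eq_mul, mul_zero]
              simp [h0, hre]
          · simp [hD, h0]
    _ = Gr.card + Set.ncard {A | A ∈ (D : Set (Matrix (Fin n) (Fin m) K)) ∧ A.rank = e} := by
        rw [Finset.sum_add_distrib]
        congr 1
        · simp [Finset.sum_ite_eq]
        · rw [Set.ncard_eq_toFinset_card', Set.toFinset_setOf, Finset.card_filter]
          rfl

set_option maxHeartbeats 1600000 in
/-- reindexing a sum over `e`-dimensional subspaces via orthogonal complements. -/
lemma sum_orth_reindex [Fintype (Submodule K (Fin n → K))] (e : ℕ) (he : e ≤ n)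
    (f : Submodule K (Fin n → K) → ℕ) :
    ∑ U ∈ Finset.univ.filter (fun U : Submodule K (Fin n → K) => finrank K U = e),
        f ((phi K n).orthogonal U)
      = ∑ W ∈ Finset.univ.filter (fun W : Submodule K (Fin n → K) => finrank K W = n - e), f W := by
  have hfr : ∀ U : Submodule K (Fin n → K),
      finrank K ((phi K n).orthogonal U) = n - finrank K U := by
    intro U
    rw [LinearMap.BilinForm.finrank_orthogonal phi_nondeg U]
    congr 1
    simp [Module.finrank_pi]
  have hUle : ∀ U : Submodule K (Fin n → K), finrank K U ≤ n := by
    intro U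
    have := Submodule.finrank_le U
    simpa [Module.finrank_pi] using this
  refine Finset.sum_nbij' (fun U => (phi K n).orthogonal U) (fun W => (phi K n).orthogonal W)
    ?_ ?_ ?_ ?_ ?_
  · intro U hU
    rw [Finset.mem_filter] at *
    exact ⟨Finset.mem_univ _, by rw [hfr, hU.2]⟩
  · intro W hW
    rw [Finset.mem_filter] at *
    refine ⟨Finset.mem_univ _, ?_⟩
    rw [hfr, hW.2]
    omega
  · intro U _
    exact LinearMap.BilinForm.orthogonal_orthogonal phi_nondeg phi_refl U
  · intro W _
    exact LinearMap.BilinForm.orthogonal_orthogonal phi_nondeg phi_refl W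
  · intro U _
    rfl

end counting
end AMRDaux

/-- For a dually AMRD code `C` with `m ∣ t` (so `d = n - t/m`, `d^⊥ = t/m`), the
number of minimum-rank codewords of `C` equals that of `C^⊥`:
`A_d(C) = A_{d^⊥}(C^⊥)`. -/
theorem dually_AMRD_min_weight_count
    (Fq : Type*) [Field Fq] [Fintype Fq]
    (n m t d dp : ℕ) (hnm : n ≤ m) (hmt : m ∣ t)
    (C : Submodule Fq (Matrix (Fin n) (Fin m) Fq)) (hC0 : C ≠ ⊥) (hC1 : C ≠ ⊤)
    (ht : finrank Fq C = t)
    (hd : MatMinDist (C : Set (Matrix (Fin n) (Fin m) Fq)) d)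
    (hdp : MatMinDist (matDual C) dp)
    (hA : d + t / m = n) (hAp : dp = t / m) :
    rankDist (C : Set (Matrix (Fin n) (Fin m) Fq)) d = rankDist (matDual C) dp := by
  classical
  haveI : Finite (Submodule Fq (Fin n → Fq)) :=
    Finite.of_injective (fun W => (W : Set (Fin n → Fq))) SetLike.coe_injective
  haveI : Fintype (Submodule Fq (Fin n → Fq)) := Fintype.ofFinite _
  set ν := t / m with hν
  have htm : m * ν = t := Nat.mul_div_cancel' hmt
  have hm0 : m ≠ 0 := by
    rintro rfl
    rw [zero_dvd_iff] at hmt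
    apply hC0
    rw [← Submodule.finrank_eq_zero (S := C), ht, hmt]
  obtain ⟨A₀, hA₀C, hA₀ne, hA₀rk⟩ := hd.1
  have hd1 : 1 ≤ d := hA₀rk ▸ AMRDaux.one_le_rank hA₀ne
  obtain ⟨B₀, hB₀C, hB₀ne, hB₀rk⟩ := hdp.1
  have hdp1 : 1 ≤ dp := hB₀rk ▸ AMRDaux.one_le_rank hB₀ne
  have hν1 : 1 ≤ ν := hAp ▸ hdp1
  set Cp := (AMRDaux.Phi Fq n m).orthogonal C with hCp
  have hdual : matDual C = (Cp : Set (Matrix (Fin n) (Fin m) Fq)) := by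
    ext B
    simp only [matDual, Set.mem_setOf_eq, SetLike.mem_coe, hCp,
      LinearMap.BilinForm.mem_orthogonal_iff]
    have hsymm : ∀ X Y : Matrix (Fin n) (Fin m) Fq,
        AMRDaux.Phi Fq n m X Y = AMRDaux.Phi Fq n m Y X := fun X Y => by
      simpa using AMRDaux.Phi_symm.eq X Y
    constructor
    · intro h A hA
      have h1 : Matrix.trace (B * Aᵀ) = 0 := h A hA
      rw [AMRDaux.Phi_eq_trace] at h1
      rw [← hsymm B A]
      exact h1
    · intro h A hA
      rw [AMRDaux.Phi_eq_trace, hsymm B A]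
      exact h A hA
  have hmin' : ∀ B ∈ Cp, B ≠ 0 → ν ≤ B.rank := by
    intro B hB hBne
    have := hdp.2 B (by rw [hdual]; exact hB) hBne
    omega
  have E1 := AMRDaux.sum_card_inf C d hd1 (fun A hA hne => hd.2 A hA hne)
  have E4 := AMRDaux.sum_card_inf Cp ν hν1 hmin'
  have E2 : ∀ U ∈ Finset.univ.filter (fun U : Submodule Fq (Fin n → Fq) => finrank Fq U = d),
      Nat.card (C ⊓ AMRDaux.colSub U : Submodule Fq (Matrix (Fin n) (Fin m) Fq))
      = Nat.card (Cp ⊓ AMRDaux.colSub ((AMRDaux.phi Fq n).orthogonal U) :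
          Submodule Fq (Matrix (Fin n) (Fin m) Fq)) := by
    intro U hU
    rw [Finset.mem_filter] at hU
    apply AMRDaux.card_inf_orth
    have hnd : n - d = ν := by omega
    rw [ht, hU.2, hnd]
    exact htm.symm
  have E3 : ∑ U ∈ Finset.univ.filter (fun U : Submodule Fq (Fin n → Fq) => finrank Fq U = d),
      Nat.card (Cp ⊓ AMRDaux.colSub ((AMRDaux.phi Fq n).orthogonal U) :
        Submodule Fq (Matrix (Fin n) (Fin m) Fq))
      = ∑ W ∈ Finset.univ.filter (fun W : Submodule Fq (Fin n → Fq) => finrank Fq W = ν),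
      Nat.card (Cp ⊓ AMRDaux.colSub W : Submodule Fq (Matrix (Fin n) (Fin m) Fq)) := by
    have hnd : n - d = ν := by omega
    have := AMRDaux.sum_orth_reindex (K := Fq) (n := n) d (by omega)
      (fun W => Nat.card (Cp ⊓ AMRDaux.colSub W : Submodule Fq (Matrix (Fin n) (Fin m) Fq)))
    rw [hnd] at this
    exact this
  have E5 : (Finset.univ.filter (fun U : Submodule Fq (Fin n → Fq) => finrank Fq U = d)).card
      = (Finset.univ.filter (fun W : Submodule Fq (Fin n → Fq) => finrank Fq W = ν)).card := by
    have hnd : n - d = ν := by omega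
    have := AMRDaux.sum_orth_reindex (K := Fq) (n := n) d (by omega) (fun _ => 1)
    rw [hnd] at this
    simpa using this
  have key : ∑ U ∈ Finset.univ.filter (fun U : Submodule Fq (Fin n → Fq) => finrank Fq U = d),
      Nat.card (C ⊓ AMRDaux.colSub U : Submodule Fq (Matrix (Fin n) (Fin m) Fq))
      = ∑ W ∈ Finset.univ.filter (fun W : Submodule Fq (Fin n → Fq) => finrank Fq W = ν),
      Nat.card (Cp ⊓ AMRDaux.colSub W : Submodule Fq (Matrix (Fin n) (Fin m) Fq)) := by
    rw [Finset.sum_congr rfl E2]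
    exact E3
  rw [key, E4] at E1
  have hfinal : Set.ncard {A | A ∈ (C : Set (Matrix (Fin n) (Fin m) Fq)) ∧ A.rank = d}
      = Set.ncard {A | A ∈ (Cp : Set (Matrix (Fin n) (Fin m) Fq)) ∧ A.rank = ν} := by
    omega
  rw [rankDist, rankDist, hdual, hAp]
  exact hfinal
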